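/- Let d ≥ 1, θ* ∈ ℝ^d, and W₀ ∈ ℝ^{d×d} symmetric positive definite. On a probability space (Ω, F, P), let (η_i)_{i≥1} be i.i.d. real random variables with E[η_i] = 0 and E[η_i²] = σ², and let F_s = σ(η₁,…,η_s). Let each action x_i be an F_{i−1}-measurable random vector in ℝ^d with ‖x_i‖₂ = 1 almost surely, and let θ̂_t = (X_tᵀX_t + W₀)⁻¹X_tᵀY_t where X_t ∈ ℝ^{t×d} has rows x₁,…,x_t and Y_t = X_tθ* + (η₁,…,η_t)ᵀ. Then liminf_{t→∞} t · E[‖θ̂_t − θ*‖₂²] ≥ σ². That is, the mean square estimation error of any adaptive policy is at least σ²/t + o(1/t). -/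

import Mathlib

open MeasureTheory ProbabilityTheory Matrix Filter Topology

private lemma dot_self_nonneg' {d : ℕ} (v : Fin d → ℝ) : 0 ≤ v ⬝ᵥ v :=
  Finset.sum_nonneg fun _ _ => mul_self_nonneg _

private lemma dot_cs {d : ℕ} (v w : Fin d → ℝ) : (v ⬝ᵥ w)^2 ≤ (v ⬝ᵥ v) * (w ⬝ᵥ w) := by
  have h := Finset.sum_mul_sq_le_sq_mul_sq Finset.univ v w
  simpa [dotProduct, sq] using h

private lemma err_eq {d t : ℕ} (W0 : Matrix (Fin d) (Fin d) ℝ) (hW0 : W0.PosDef)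
    (θstar : Fin d → ℝ) (X : Matrix (Fin t) (Fin d) ℝ) (ηv : Fin t → ℝ) :
    (W0 + Xᵀ * X) *ᵥ ((W0 + Xᵀ * X)⁻¹ *ᵥ (Xᵀ *ᵥ (X *ᵥ θstar + ηv)) - θstar)
      = Xᵀ *ᵥ ηv - W0 *ᵥ θstar := by
  set V := W0 + Xᵀ * X with hV
  have hpsd : (Xᵀ * X).PosSemidef := by
    have h := Matrix.posSemidef_conjTranspose_mul_self X
    rwa [Matrix.conjTranspose_eq_transpose_of_trivial] at h
  have hVpd : V.PosDef := hW0.add_posSemidef hpsd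
  have hdet : IsUnit V.det := isUnit_iff_ne_zero.mpr hVpd.det_pos.ne'
  have hVinv : ∀ v : Fin d → ℝ, V *ᵥ (V⁻¹ *ᵥ v) = v := fun v => by
    rw [mulVec_mulVec, Matrix.mul_nonsing_inv _ hdet, one_mulVec]
  have h1 : Xᵀ *ᵥ (X *ᵥ θstar + ηv) = V *ᵥ θstar - W0 *ᵥ θstar + Xᵀ *ᵥ ηv := by
    rw [mulVec_add, mulVec_mulVec, hV, add_mulVec]
    abel
  rw [h1, mulVec_sub, hVinv]
  abel

private lemma ptwise {d t : ℕ} (W0 : Matrix (Fin d) (Fin d) ℝ) (xs : Fin t → Fin d → ℝ)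
    (hunit : ∀ i, xs i ⬝ᵥ xs i = 1) (e : Fin d → ℝ) (c2 : ℝ)
    (hc2 : (∑ i : Fin d, ∑ j : Fin d, (W0 i j)^2) ≤ c2) :
    ((W0 + (Matrix.of fun i j => xs i j)ᵀ * (Matrix.of fun i j => xs i j)) *ᵥ e) ⬝ᵥ
      ((W0 + (Matrix.of fun i j => xs i j)ᵀ * (Matrix.of fun i j => xs i j)) *ᵥ e)
      ≤ (((t:ℝ)+1)*((t:ℝ)+c2)) * (e ⬝ᵥ e) := by
  have hc2nn : 0 ≤ c2 := le_trans (by positivity) hc2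
  have hen : 0 ≤ e ⬝ᵥ e := dot_self_nonneg' e
  set u : Fin d → ℝ := W0 *ᵥ e with hu
  set w : Fin d → ℝ := ∑ i : Fin t, (xs i ⬝ᵥ e) • xs i with hw
  have hVe : (W0 + (Matrix.of fun i j => xs i j)ᵀ * (Matrix.of fun i j => xs i j)) *ᵥ e
      = u + w := by
    rw [add_mulVec]
    congr 1
    funext j
    rw [hw]
    simp only [Matrix.mulVec, Matrix.mul_apply, dotProduct, Matrix.transpose_apply,
      Matrix.of_apply, Finset.sum_apply, Pi.smul_apply, smul_eq_mul, Finset.sum_mul]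
    rw [Finset.sum_comm]
    refine Finset.sum_congr rfl fun i _ => Finset.sum_congr rfl fun k _ => by ring
  have hA : u ⬝ᵥ u ≤ c2 * (e ⬝ᵥ e) := by
    have h1 : u ⬝ᵥ u = ∑ j : Fin d, (W0 j ⬝ᵥ e)^2 := by
      simp [dotProduct, hu, Matrix.mulVec, sq]
    rw [h1]
    calc ∑ j : Fin d, (W0 j ⬝ᵥ e)^2 ≤ ∑ j : Fin d, (∑ k : Fin d, (W0 j k)^2) * (e ⬝ᵥ e) := by
          refine Finset.sum_le_sum fun j _ => ?_
          have h3 := dot_cs (W0 j) e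
          have h2 : W0 j ⬝ᵥ W0 j = ∑ k : Fin d, (W0 j k)^2 := by
            simp [dotProduct, sq]
          nlinarith [h3]
      _ = (∑ j : Fin d, ∑ k : Fin d, (W0 j k)^2) * (e ⬝ᵥ e) := by rw [Finset.sum_mul]
      _ ≤ c2 * (e ⬝ᵥ e) := mul_le_mul_of_nonneg_right hc2 hen
  have hwsq : ∀ i : Fin t, (xs i ⬝ᵥ e)^2 ≤ e ⬝ᵥ e := by
    intro i
    have h := dot_cs (xs i) e
    rw [hunit i, one_mul] at h
    exact h
  have hB : w ⬝ᵥ w ≤ ((t:ℝ) * t) * (e ⬝ᵥ e) := by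
    have h1 : w ⬝ᵥ w = ∑ j : Fin d, (∑ i : Fin t, (xs i ⬝ᵥ e) * xs i j)^2 := by
      simp [dotProduct, hw, Finset.sum_apply, Pi.smul_apply, smul_eq_mul, sq]
    rw [h1]
    calc ∑ j : Fin d, (∑ i : Fin t, (xs i ⬝ᵥ e) * xs i j)^2
        ≤ ∑ j : Fin d, (t:ℝ) * ∑ i : Fin t, ((xs i ⬝ᵥ e) * xs i j)^2 := by
          refine Finset.sum_le_sum fun j _ => ?_
          have h := sq_sum_le_card_mul_sum_sq (s := (Finset.univ : Finset (Fin t)))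
            (f := fun i => (xs i ⬝ᵥ e) * xs i j)
          simpa using h
      _ = (t:ℝ) * ∑ i : Fin t, (xs i ⬝ᵥ e)^2 * (xs i ⬝ᵥ xs i) := by
          rw [← Finset.mul_sum, Finset.sum_comm]
          congr 1
          refine Finset.sum_congr rfl fun i _ => ?_
          simp only [dotProduct, Finset.mul_sum]
          refine Finset.sum_congr rfl fun k _ => by ring
      _ ≤ ((t:ℝ) * t) * (e ⬝ᵥ e) := by
          have h5 : ∑ i : Fin t, (xs i ⬝ᵥ e)^2 * (xs i ⬝ᵥ xs i) ≤ (t:ℝ) * (e ⬝ᵥ e) := by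
            calc ∑ i : Fin t, (xs i ⬝ᵥ e)^2 * (xs i ⬝ᵥ xs i)
                = ∑ i : Fin t, (xs i ⬝ᵥ e)^2 :=
                  Finset.sum_congr rfl fun i _ => by rw [hunit i, mul_one]
              _ ≤ ∑ _i : Fin t, (e ⬝ᵥ e) := Finset.sum_le_sum fun i _ => hwsq i
              _ = (t:ℝ) * (e ⬝ᵥ e) := by simp [mul_comm]
          have htn : (0:ℝ) ≤ t := Nat.cast_nonneg t
          calc (t:ℝ) * ∑ i : Fin t, (xs i ⬝ᵥ e)^2 * (xs i ⬝ᵥ xs i)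
              ≤ (t:ℝ) * ((t:ℝ) * (e ⬝ᵥ e)) := mul_le_mul_of_nonneg_left h5 htn
            _ = ((t:ℝ) * t) * (e ⬝ᵥ e) := by ring
  have hcross : 2 * (u ⬝ᵥ w) ≤ c2 * t * (e ⬝ᵥ e) + (t:ℝ) * (e ⬝ᵥ e) := by
    have hcs := dot_cs u w
    have hwn : 0 ≤ w ⬝ᵥ w := dot_self_nonneg' w
    have htn : (0:ℝ) ≤ t := Nat.cast_nonneg t
    set P : ℝ := c2 * t * (e ⬝ᵥ e) with hP
    set Q : ℝ := (t:ℝ) * (e ⬝ᵥ e) with hQ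
    have hPn : 0 ≤ P := by positivity
    have hQn : 0 ≤ Q := by positivity
    have h1 : (u ⬝ᵥ w)^2 ≤ P * Q := by
      have h2 : (u ⬝ᵥ u) * (w ⬝ᵥ w) ≤ (c2 * (e ⬝ᵥ e)) * (((t:ℝ) * t) * (e ⬝ᵥ e)) :=
        mul_le_mul hA hB hwn (by positivity)
      calc (u ⬝ᵥ w)^2 ≤ (u ⬝ᵥ u) * (w ⬝ᵥ w) := hcs
        _ ≤ (c2 * (e ⬝ᵥ e)) * (((t:ℝ) * t) * (e ⬝ᵥ e)) := h2
        _ = P * Q := by rw [hP, hQ]; ring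
    have hs : u ⬝ᵥ w ≤ Real.sqrt (P * Q) := by
      calc u ⬝ᵥ w ≤ |u ⬝ᵥ w| := le_abs_self _
        _ = Real.sqrt ((u ⬝ᵥ w)^2) := (Real.sqrt_sq_eq_abs _).symm
        _ ≤ Real.sqrt (P * Q) := Real.sqrt_le_sqrt h1
    have hPQ : Real.sqrt (P * Q) = Real.sqrt P * Real.sqrt Q := Real.sqrt_mul hPn Q
    have h4 := two_mul_le_add_sq (Real.sqrt P) (Real.sqrt Q)
    rw [Real.sq_sqrt hPn, Real.sq_sqrt hQn] at h4
    nlinarith [hs, h4, hPQ]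
  rw [hVe]
  have hexp : (u + w) ⬝ᵥ (u + w) = u ⬝ᵥ u + 2 * (u ⬝ᵥ w) + w ⬝ᵥ w := by
    rw [add_dotProduct, dotProduct_add, dotProduct_add,
      dotProduct_comm w u]
    ring
  rw [hexp]
  have hexp2 : (((t:ℝ)+1)*((t:ℝ)+c2))*(e ⬝ᵥ e)
      = c2*(e ⬝ᵥ e) + c2*(t:ℝ)*(e ⬝ᵥ e) + (t:ℝ)*(e ⬝ᵥ e) + ((t:ℝ)*t)*(e ⬝ᵥ e) := by ring
  linarith [hA, hB, hcross]

/-- Asymptotic lower bound: for any adaptive unit-norm action policy,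
`liminf_{t→∞} t·E[‖θ̂_t − θ*‖₂²] ≥ σ²`, i.e. the mean square error is at least
`σ²/t + o(1/t)`. (The expectation of the nonnegative squared error is written as a
Lebesgue integral with values in `ℝ≥0∞`.) -/
theorem stmt_4 {d : ℕ} (hd : 1 ≤ d) {Ω : Type*} [MeasurableSpace Ω]
    (P : Measure Ω) [IsProbabilityMeasure P]
    (θstar : Fin d → ℝ)
    (W0 : Matrix (Fin d) (Fin d) ℝ) (hW0 : W0.PosDef)
    (σ : ℝ)
    (η : ℕ → Ω → ℝ) (hηmeas : ∀ i, Measurable (η i))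
    (hindep : iIndepFun η P)
    (hident : ∀ i, IdentDistrib (η i) (η 0) P P)
    (hL1 : ∀ i, Integrable (η i) P)
    (hL2 : ∀ i, Integrable (fun ω => (η i ω) ^ 2) P)
    (hmean : ∀ i, ∫ ω, η i ω ∂P = 0)
    (hvar : ∀ i, ∫ ω, (η i ω) ^ 2 ∂P = σ ^ 2)
    (x : ℕ → Ω → Fin d → ℝ)
    (hxadapt : ∀ i, Measurable[MeasurableSpace.comap
      (fun ω => (fun k : Fin i => η (k : ℕ) ω)) inferInstance] (x i))
    (hxunit : ∀ᵐ ω ∂P, ∀ i, x i ω ⬝ᵥ x i ω = 1)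
    (θhat : (t : ℕ) → Ω → Fin d → ℝ)
    (hθhat : ∀ t ω, θhat t ω =
      (W0 + (Matrix.of fun (i : Fin t) j => x (i : ℕ) ω j)ᵀ
          * (Matrix.of fun (i : Fin t) j => x (i : ℕ) ω j))⁻¹
        *ᵥ ((Matrix.of fun (i : Fin t) j => x (i : ℕ) ω j)ᵀ
          *ᵥ ((Matrix.of fun (i : Fin t) j => x (i : ℕ) ω j) *ᵥ θstar
              + fun i : Fin t => η (i : ℕ) ω))) :
    ENNReal.ofReal (σ ^ 2)
      ≤ atTop.liminf (fun t : ℕ => (t : ENNReal)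
          * ∫⁻ ω, ENNReal.ofReal ((θhat t ω - θstar) ⬝ᵥ (θhat t ω - θstar)) ∂P) := by
  classical
  -- σ-algebras generated by the first j noise variables
  set Mσ : ℕ → MeasurableSpace Ω :=
    fun j => MeasurableSpace.comap (fun ω => (fun k : Fin j => η (k : ℕ) ω)) inferInstance
    with hMσ_def
  have htuple : ∀ j, Measurable[Mσ j] (fun ω => (fun k : Fin j => η (k : ℕ) ω)) :=
    fun j => Measurable.of_comap_le le_rfl
  have hη_Mσ : ∀ {k j : ℕ}, k < j → Measurable[Mσ j] (η k) := by
    intro k j hk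
    exact (measurable_pi_apply (⟨k, hk⟩ : Fin j)).comp (htuple j)
  have hx_Mσ : ∀ {i j : ℕ}, i ≤ j → Measurable[Mσ j] (x i) := by
    intro i j hij
    refine (hxadapt i).mono ?_ le_rfl
    show MeasurableSpace.comap _ _ ≤ Mσ j
    have h1 : (fun ω => fun k : Fin i => η (k : ℕ) ω)
        = (fun v : Fin j → ℝ => fun k : Fin i => v (Fin.castLE hij k))
          ∘ (fun ω => fun k : Fin j => η (k : ℕ) ω) := rfl
    rw [h1, ← MeasurableSpace.comap_comp]
    exact MeasurableSpace.comap_mono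
      (Measurable.comap_le (measurable_pi_lambda _ fun k => measurable_pi_apply _))
  have hMσ_le : ∀ j, Mσ j ≤ ‹MeasurableSpace Ω› := by
    intro j
    have h : Measurable (fun ω => fun k : Fin j => η (k : ℕ) ω) :=
      measurable_pi_lambda _ fun k => hηmeas _
    exact h.comap_le
  have hxm : ∀ i, Measurable (x i) := fun i => (hxadapt i).mono (hMσ_le i) le_rfl
  have hxmk : ∀ (i : ℕ) (k : Fin d), Measurable (fun ω => x i ω k) :=
    fun i k => (measurable_pi_apply k).comp (hxm i)
  -- independence of Mσ j from η j
  have hIndep : ∀ j : ℕ, Indep (Mσ j) (MeasurableSpace.comap (η j) inferInstance) P := by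
    intro j
    have hdisj : Disjoint (Finset.range j) ({j} : Finset ℕ) := by simp
    have hbase : Indep
        (MeasurableSpace.comap
          (fun ω (i : ↥(Finset.range j)) => η (i : ℕ) ω) inferInstance)
        (MeasurableSpace.comap
          (fun ω (i : ↥({j} : Finset ℕ)) => η (i : ℕ) ω) inferInstance) P :=
      hindep.indepFun_finset (Finset.range j) {j} hdisj hηmeas
    refine indep_of_indep_of_le_right (indep_of_indep_of_le_left hbase ?_) ?_
    · show Mσ j ≤ _
      have h1 : (fun ω => fun k : Fin j => η (k : ℕ) ω)
          = (fun v : (↥(Finset.range j) → ℝ) => fun k : Fin j =>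
              v ⟨(k : ℕ), by simpa [Finset.mem_range] using k.2⟩)
            ∘ (fun ω (i : ↥(Finset.range j)) => η (i : ℕ) ω) := rfl
      show MeasurableSpace.comap _ _ ≤ _
      rw [h1, ← MeasurableSpace.comap_comp]
      exact MeasurableSpace.comap_mono
        (Measurable.comap_le (measurable_pi_lambda _ fun k => measurable_pi_apply _))
    · have h2 : η j
          = (fun v : (↥({j} : Finset ℕ) → ℝ) => v ⟨j, by simp⟩)
            ∘ (fun ω (i : ↥({j} : Finset ℕ)) => η (i : ℕ) ω) := rfl
      rw [h2, ← MeasurableSpace.comap_comp]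
      exact MeasurableSpace.comap_mono (Measurable.comap_le (measurable_pi_apply _))
  have hIndepF : ∀ (j : ℕ) (F : Ω → ℝ), Measurable[Mσ j] F → IndepFun F (η j) P := by
    intro j F hF
    exact indep_of_indep_of_le_left (hIndep j) (Measurable.comap_le hF)
  have hzero : ∀ (j : ℕ) (F : Ω → ℝ), Measurable[Mσ j] F →
      ∫ ω, F ω * η j ω ∂P = 0 := by
    intro j F hF
    have hFsm : AEStronglyMeasurable F P :=
      (hF.mono (hMσ_le j) le_rfl).aestronglyMeasurable
    rw [(hIndepF j F hF).integral_fun_mul_eq_mul_integral hFsm (hηmeas j).aestronglyMeasurable,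
      hmean j, mul_zero]
  -- abbreviations
  set a : Fin d → ℝ := W0 *ᵥ θstar with ha_def
  set c2 : ℝ := ∑ i : Fin d, ∑ j : Fin d, (W0 i j)^2 with hc2_def
  have hc2nn : (0:ℝ) ≤ c2 := by positivity
  -- measurable dot products
  have hdotm : ∀ (i j : ℕ), Measurable[Mσ (max i j + 1)] (fun ω => x i ω ⬝ᵥ x j ω) := by
    intro i j
    show Measurable[Mσ (max i j + 1)] (fun ω => ∑ k : Fin d, x i ω k * x j ω k)
    refine Finset.measurable_sum _ fun k _ => Measurable.mul ?_ ?_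
    · exact (measurable_pi_apply k).comp (hx_Mσ ((le_max_left i j).trans (Nat.le_succ _)))
    · exact (measurable_pi_apply k).comp (hx_Mσ ((le_max_right i j).trans (Nat.le_succ _)))
  have hdotm' : ∀ (i j : ℕ), Measurable (fun ω => x i ω ⬝ᵥ x j ω) :=
    fun i j => ((hdotm i j).mono (hMσ_le _) le_rfl)
  -- a.e. bounds
  have habs1 : ∀ᵐ ω ∂P, ∀ i j : ℕ, |x i ω ⬝ᵥ x j ω| ≤ 1 := by
    filter_upwards [hxunit] with ω hω
    intro i j
    have h := dot_cs (x i ω) (x j ω)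
    rw [hω i, hω j, one_mul] at h
    exact abs_le_one_iff_mul_self_le_one.mpr (by nlinarith [h])
  have habs2 : ∀ᵐ ω ∂P, ∀ i : ℕ, |x i ω ⬝ᵥ a| ≤ 1 + a ⬝ᵥ a := by
    filter_upwards [hxunit] with ω hω
    intro i
    have h := dot_cs (x i ω) a
    rw [hω i, one_mul] at h
    have han : 0 ≤ a ⬝ᵥ a := dot_self_nonneg' a
    rw [abs_le]
    constructor <;> nlinarith [h]
  -- integrability of the quadratic terms
  have hgint : ∀ i j : ℕ, Integrable (fun ω => η i ω * η j ω * (x i ω ⬝ᵥ x j ω)) P := by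
    intro i j
    refine Integrable.mono' ((hL2 i).add (hL2 j)) ?_ ?_
    · exact (((hηmeas i).mul (hηmeas j)).mul (hdotm' i j)).aestronglyMeasurable
    · filter_upwards [habs1] with ω hω
      have h2 : |η i ω * η j ω| ≤ η i ω ^ 2 + η j ω ^ 2 := by
        rw [abs_mul]
        nlinarith [sq_nonneg (|η i ω| - |η j ω|), abs_nonneg (η i ω), abs_nonneg (η j ω),
          sq_abs (η i ω), sq_abs (η j ω)]
      calc ‖η i ω * η j ω * (x i ω ⬝ᵥ x j ω)‖
          = |η i ω * η j ω| * |x i ω ⬝ᵥ x j ω| := by rw [Real.norm_eq_abs, abs_mul]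
        _ ≤ (η i ω ^ 2 + η j ω ^ 2) * 1 := by
            refine mul_le_mul h2 (hω i j) (abs_nonneg _) ?_
            nlinarith [sq_nonneg (η i ω), sq_nonneg (η j ω)]
        _ = η i ω ^ 2 + η j ω ^ 2 := mul_one _
  have hhint : ∀ i : ℕ, Integrable (fun ω => η i ω * (x i ω ⬝ᵥ a)) P := by
    intro i
    refine Integrable.mono' ((hL1 i).abs.mul_const (1 + a ⬝ᵥ a)) ?_ ?_
    · refine ((hηmeas i).mul ?_).aestronglyMeasurable
      refine Finset.measurable_sum _ fun k _ => ((hxmk i k).mul measurable_const)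
    · filter_upwards [habs2] with ω hω
      calc ‖η i ω * (x i ω ⬝ᵥ a)‖ = |η i ω| * |x i ω ⬝ᵥ a| := by rw [Real.norm_eq_abs, abs_mul]
        _ ≤ |η i ω| * (1 + a ⬝ᵥ a) := mul_le_mul_of_nonneg_left (hω i) (abs_nonneg _)
  -- zero cross terms
  have hcross0 : ∀ i j : ℕ, i < j →
      ∫ ω, η i ω * η j ω * (x i ω ⬝ᵥ x j ω) ∂P = 0 := by
    intro i j hij
    have hdm : Measurable[Mσ j] (fun ω => x i ω ⬝ᵥ x j ω) := by
      show Measurable[Mσ j] (fun ω => ∑ k : Fin d, x i ω k * x j ω k)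
      refine Finset.measurable_sum _ fun k _ => Measurable.mul ?_ ?_
      · exact (measurable_pi_apply k).comp (hx_Mσ hij.le)
      · exact (measurable_pi_apply k).comp (hx_Mσ le_rfl)
    have hFm : Measurable[Mσ j] (fun ω => η i ω * (x i ω ⬝ᵥ x j ω)) :=
      (hη_Mσ hij).mul hdm
    have h1 : (fun ω => η i ω * η j ω * (x i ω ⬝ᵥ x j ω))
        = fun ω => (η i ω * (x i ω ⬝ᵥ x j ω)) * η j ω := funext fun ω => by ring
    rw [h1]
    exact hzero j _ hFm
  have hdiag : ∀ i : ℕ, ∫ ω, η i ω * η i ω * (x i ω ⬝ᵥ x i ω) ∂P = σ ^ 2 := by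
    intro i
    have h1 : (fun ω => η i ω * η i ω * (x i ω ⬝ᵥ x i ω)) =ᵐ[P] fun ω => η i ω ^ 2 := by
      filter_upwards [hxunit] with ω hω
      rw [hω i]
      ring
    rw [integral_congr_ae h1, hvar i]
  have hlin0 : ∀ i : ℕ, ∫ ω, η i ω * (x i ω ⬝ᵥ a) ∂P = 0 := by
    intro i
    have hdm : Measurable[Mσ i] (fun ω => x i ω ⬝ᵥ a) := by
      show Measurable[Mσ i] (fun ω => ∑ k : Fin d, x i ω k * a k)
      refine Finset.measurable_sum _ fun k _ => Measurable.mul ?_ measurable_const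
      exact (measurable_pi_apply k).comp (hx_Mσ le_rfl)
    have h1 : (fun ω => η i ω * (x i ω ⬝ᵥ a))
        = fun ω => (x i ω ⬝ᵥ a) * η i ω := funext fun ω => by ring
    rw [h1]
    exact hzero i _ hdm
  -- per-time-step analysis
  have hc2pos : (0:ℝ) < c2 + 1 := by positivity
  set Kr : ℕ → ℝ := fun t => ((t:ℝ)+1)*((t:ℝ)+(c2+1)) with hKr_def
  have hKrpos : ∀ t : ℕ, 0 < Kr t := by
    intro t
    have h1 : (0:ℝ) < (t:ℝ)+1 := by positivity
    have h2 : (0:ℝ) < (t:ℝ)+(c2+1) := add_pos_of_nonneg_of_pos (Nat.cast_nonneg t) hc2pos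
    exact mul_pos h1 h2
  set I : ℕ → ENNReal := fun t =>
    ∫⁻ ω, ENNReal.ofReal ((θhat t ω - θstar) ⬝ᵥ (θhat t ω - θstar)) ∂P with hI_def
  have hmain : ∀ t : ℕ, ENNReal.ofReal (σ^2 * t) ≤ ENNReal.ofReal (Kr t) * I t := by
    intro t
    set S : Ω → Fin d → ℝ := fun ω => ∑ i : Fin t, η (i:ℕ) ω • x (i:ℕ) ω with hS_def
    set q : Ω → ℝ := fun ω => (S ω - a) ⬝ᵥ (S ω - a) with hq_def
    have hSapp : ∀ (ω : Ω) (k : Fin d), S ω k = ∑ i : Fin t, η (i:ℕ) ω * x (i:ℕ) ω k := by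
      intro ω k
      rw [hS_def]
      simp [Finset.sum_apply, Pi.smul_apply, smul_eq_mul]
    have hSS : ∀ ω, S ω ⬝ᵥ S ω
        = ∑ i : Fin t, ∑ j : Fin t, η (i:ℕ) ω * η (j:ℕ) ω * (x (i:ℕ) ω ⬝ᵥ x (j:ℕ) ω) := by
      intro ω
      show (∑ k : Fin d, S ω k * S ω k) = _
      calc ∑ k : Fin d, S ω k * S ω k
          = ∑ k : Fin d, ∑ i : Fin t, ∑ j : Fin t,
              (η (i:ℕ) ω * x (i:ℕ) ω k) * (η (j:ℕ) ω * x (j:ℕ) ω k) := by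
            refine Finset.sum_congr rfl fun k _ => ?_
            rw [hSapp ω k, Finset.sum_mul_sum]
        _ = ∑ i : Fin t, ∑ k : Fin d, ∑ j : Fin t,
              (η (i:ℕ) ω * x (i:ℕ) ω k) * (η (j:ℕ) ω * x (j:ℕ) ω k) := Finset.sum_comm
        _ = ∑ i : Fin t, ∑ j : Fin t, ∑ k : Fin d,
              (η (i:ℕ) ω * x (i:ℕ) ω k) * (η (j:ℕ) ω * x (j:ℕ) ω k) :=
            Finset.sum_congr rfl fun i _ => Finset.sum_comm
        _ = ∑ i : Fin t, ∑ j : Fin t, η (i:ℕ) ω * η (j:ℕ) ω * (x (i:ℕ) ω ⬝ᵥ x (j:ℕ) ω) := by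
            refine Finset.sum_congr rfl fun i _ => Finset.sum_congr rfl fun j _ => ?_
            show _ = η (i:ℕ) ω * η (j:ℕ) ω * ∑ k : Fin d, x (i:ℕ) ω k * x (j:ℕ) ω k
            rw [Finset.mul_sum]
            refine Finset.sum_congr rfl fun k _ => by ring
    have hSa : ∀ ω, S ω ⬝ᵥ a = ∑ i : Fin t, η (i:ℕ) ω * (x (i:ℕ) ω ⬝ᵥ a) := by
      intro ω
      show (∑ k : Fin d, S ω k * a k) = _
      calc ∑ k : Fin d, S ω k * a k
          = ∑ k : Fin d, ∑ i : Fin t, (η (i:ℕ) ω * x (i:ℕ) ω k) * a k := by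
            refine Finset.sum_congr rfl fun k _ => ?_
            rw [hSapp ω k, Finset.sum_mul]
        _ = ∑ i : Fin t, ∑ k : Fin d, (η (i:ℕ) ω * x (i:ℕ) ω k) * a k := Finset.sum_comm
        _ = ∑ i : Fin t, η (i:ℕ) ω * (x (i:ℕ) ω ⬝ᵥ a) := by
            refine Finset.sum_congr rfl fun i _ => ?_
            show _ = η (i:ℕ) ω * ∑ k : Fin d, x (i:ℕ) ω k * a k
            rw [Finset.mul_sum]
            refine Finset.sum_congr rfl fun k _ => by ring
    have hq_eq : q = fun ω =>
        (∑ i : Fin t, ∑ j : Fin t, η (i:ℕ) ω * η (j:ℕ) ω * (x (i:ℕ) ω ⬝ᵥ x (j:ℕ) ω))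
          - 2 * (∑ i : Fin t, η (i:ℕ) ω * (x (i:ℕ) ω ⬝ᵥ a)) + a ⬝ᵥ a := by
      funext ω
      rw [hq_def]
      show (S ω - a) ⬝ᵥ (S ω - a) = _
      rw [sub_dotProduct, dotProduct_sub, dotProduct_sub,
        dotProduct_comm a (S ω), hSS ω, hSa ω]
      ring
    have hBint : Integrable (fun ω => ∑ i : Fin t, ∑ j : Fin t,
        η (i:ℕ) ω * η (j:ℕ) ω * (x (i:ℕ) ω ⬝ᵥ x (j:ℕ) ω)) P :=
      integrable_finset_sum _ fun i _ => integrable_finset_sum _ fun j _ => hgint i j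
    have hCint : Integrable (fun ω => ∑ i : Fin t, η (i:ℕ) ω * (x (i:ℕ) ω ⬝ᵥ a)) P :=
      integrable_finset_sum _ fun i _ => hhint i
    have hqint : Integrable q P := by
      rw [hq_eq]
      exact (hBint.sub (hCint.const_mul 2)).add (integrable_const _)
    -- value of the double sum
    have hval : ∀ i j : Fin t,
        ∫ ω, η (i:ℕ) ω * η (j:ℕ) ω * (x (i:ℕ) ω ⬝ᵥ x (j:ℕ) ω) ∂P
          = if i = j then σ^2 else 0 := by
      intro i j
      by_cases h : i = j
      · subst h
        simp only [if_pos rfl]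
        exact hdiag i
      · rw [if_neg h]
        have hne : (i:ℕ) ≠ (j:ℕ) := fun hc => h (Fin.val_injective hc)
        rcases hne.lt_or_gt with hlt | hgt
        · exact hcross0 i j hlt
        · have h1 : (fun ω => η (i:ℕ) ω * η (j:ℕ) ω * (x (i:ℕ) ω ⬝ᵥ x (j:ℕ) ω))
              = fun ω => η (j:ℕ) ω * η (i:ℕ) ω * (x (j:ℕ) ω ⬝ᵥ x (i:ℕ) ω) := by
            funext ω
            rw [dotProduct_comm]
            ring
          rw [h1]
          exact hcross0 j i hgt
    have hBval : ∫ ω, (∑ i : Fin t, ∑ j : Fin t,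
        η (i:ℕ) ω * η (j:ℕ) ω * (x (i:ℕ) ω ⬝ᵥ x (j:ℕ) ω)) ∂P = (t:ℝ) * σ^2 := by
      have hswap : ∫ ω, (∑ i : Fin t, ∑ j : Fin t,
          η (i:ℕ) ω * η (j:ℕ) ω * (x (i:ℕ) ω ⬝ᵥ x (j:ℕ) ω)) ∂P
            = ∑ i : Fin t, ∫ ω, (∑ j : Fin t,
              η (i:ℕ) ω * η (j:ℕ) ω * (x (i:ℕ) ω ⬝ᵥ x (j:ℕ) ω)) ∂P :=
        integral_finset_sum _ (fun i _ => integrable_finset_sum _ fun j _ => hgint i j)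
      rw [hswap]
      have h2 : ∀ i : Fin t, ∫ ω, (∑ j : Fin t,
          η (i:ℕ) ω * η (j:ℕ) ω * (x (i:ℕ) ω ⬝ᵥ x (j:ℕ) ω)) ∂P = σ^2 := by
        intro i
        have hswap2 : ∫ ω, (∑ j : Fin t,
            η (i:ℕ) ω * η (j:ℕ) ω * (x (i:ℕ) ω ⬝ᵥ x (j:ℕ) ω)) ∂P
              = ∑ j : Fin t, ∫ ω, η (i:ℕ) ω * η (j:ℕ) ω * (x (i:ℕ) ω ⬝ᵥ x (j:ℕ) ω) ∂P :=
          integral_finset_sum _ (fun j _ => hgint i j)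
        rw [hswap2]
        calc ∑ j : Fin t, ∫ ω, η (i:ℕ) ω * η (j:ℕ) ω * (x (i:ℕ) ω ⬝ᵥ x (j:ℕ) ω) ∂P
            = ∑ j : Fin t, if i = j then σ^2 else 0 :=
              Finset.sum_congr rfl fun j _ => hval i j
          _ = σ^2 := by rw [Finset.sum_ite_eq]; simp
      rw [Finset.sum_congr rfl fun i _ => h2 i]
      simp [mul_comm]
    have hCval : ∫ ω, (∑ i : Fin t, η (i:ℕ) ω * (x (i:ℕ) ω ⬝ᵥ a)) ∂P = 0 := by
      have hswap3 : ∫ ω, (∑ i : Fin t, η (i:ℕ) ω * (x (i:ℕ) ω ⬝ᵥ a)) ∂P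
          = ∑ i : Fin t, ∫ ω, η (i:ℕ) ω * (x (i:ℕ) ω ⬝ᵥ a) ∂P :=
        integral_finset_sum _ (fun i _ => hhint i)
      rw [hswap3]
      exact Finset.sum_eq_zero fun i _ => hlin0 i
    have hqval : σ^2 * t ≤ ∫ ω, q ω ∂P := by
      have hint2 : Integrable (fun ω => 2 * ∑ i : Fin t, η (i:ℕ) ω * (x (i:ℕ) ω ⬝ᵥ a)) P :=
        hCint.const_mul 2
      have hint1 : Integrable (fun ω =>
          (∑ i : Fin t, ∑ j : Fin t, η (i:ℕ) ω * η (j:ℕ) ω * (x (i:ℕ) ω ⬝ᵥ x (j:ℕ) ω))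
            - 2 * ∑ i : Fin t, η (i:ℕ) ω * (x (i:ℕ) ω ⬝ᵥ a)) P := hBint.sub hint2
      have h3 : ∫ ω, q ω ∂P = (t:ℝ) * σ^2 - 2 * 0 + a ⬝ᵥ a := by
        simp only [hq_eq]
        rw [integral_add hint1 (integrable_const _),
          integral_sub hBint hint2, integral_const_mul, hBval, hCval]
        simp
      rw [h3]
      have := dot_self_nonneg' a
      linarith
    -- pointwise bound
    have hptw : ∀ᵐ ω ∂P, q ω ≤ Kr t * ((θhat t ω - θstar) ⬝ᵥ (θhat t ω - θstar)) := by
      filter_upwards [hxunit] with ω hω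
      set X : Matrix (Fin t) (Fin d) ℝ := Matrix.of fun (i : Fin t) j => x (i:ℕ) ω j with hX_def
      have hSmul : Xᵀ *ᵥ (fun i : Fin t => η (i:ℕ) ω) = S ω := by
        funext k
        show (∑ i : Fin t, Xᵀ k i * η (i:ℕ) ω) = S ω k
        rw [hSapp ω k]
        refine Finset.sum_congr rfl fun i _ => ?_
        show X i k * η (i:ℕ) ω = _
        rw [hX_def]
        simp [mul_comm]
      have he1 : (W0 + Xᵀ * X) *ᵥ (θhat t ω - θstar) = S ω - a := by
        rw [hθhat t ω]
        have h := err_eq W0 hW0 θstar X (fun i : Fin t => η (i:ℕ) ω)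
        rw [hSmul] at h
        exact h
      have h2 : q ω = ((W0 + Xᵀ * X) *ᵥ (θhat t ω - θstar)) ⬝ᵥ
          ((W0 + Xᵀ * X) *ᵥ (θhat t ω - θstar)) := by
        rw [he1, hq_def]
      rw [h2]
      have h3 := ptwise W0 (fun i : Fin t => x (i:ℕ) ω) (fun i => hω (i:ℕ))
        (θhat t ω - θstar) (c2 + 1) (by rw [hc2_def]; linarith)
      exact h3
    -- assemble in ℝ≥0∞
    have hq_nonneg : 0 ≤ᵐ[P] q := ae_of_all _ fun ω => dot_self_nonneg' _
    calc ENNReal.ofReal (σ^2 * t) ≤ ENNReal.ofReal (∫ ω, q ω ∂P) :=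
          ENNReal.ofReal_le_ofReal hqval
      _ = ∫⁻ ω, ENNReal.ofReal (q ω) ∂P := ofReal_integral_eq_lintegral_ofReal hqint hq_nonneg
      _ ≤ ∫⁻ ω, ENNReal.ofReal (Kr t) *
            ENNReal.ofReal ((θhat t ω - θstar) ⬝ᵥ (θhat t ω - θstar)) ∂P := by
          refine lintegral_mono_ae ?_
          filter_upwards [hptw] with ω hω
          rw [← ENNReal.ofReal_mul (hKrpos t).le]
          exact ENNReal.ofReal_le_ofReal hω
      _ = ENNReal.ofReal (Kr t) * I t := lintegral_const_mul' _ _ ENNReal.ofReal_ne_top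
  -- lower bound for each term of the sequence
  set vseq : ℕ → ENNReal := fun t => ENNReal.ofReal (σ^2 * t * t / Kr t) with hvseq_def
  have hvle : ∀ t : ℕ, vseq t ≤ (t : ENNReal) * I t := by
    intro t
    rw [hvseq_def]
    show ENNReal.ofReal (σ^2 * t * t / Kr t) ≤ _
    rw [ENNReal.ofReal_div_of_pos (hKrpos t)]
    refine (ENNReal.div_le_iff_le_mul (Or.inl (ENNReal.ofReal_pos.mpr (hKrpos t)).ne')
      (Or.inl ENNReal.ofReal_ne_top)).mpr ?_
    · have harr : σ^2 * (t:ℝ) * t = (t:ℝ) * (σ^2 * t) := by ring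
      rw [harr, ENNReal.ofReal_mul (Nat.cast_nonneg t), ENNReal.ofReal_natCast]
      calc (t : ENNReal) * ENNReal.ofReal (σ^2 * t)
          ≤ (t : ENNReal) * (ENNReal.ofReal (Kr t) * I t) :=
            mul_le_mul_right (hmain t) _
        _ = (t : ENNReal) * I t * ENNReal.ofReal (Kr t) := by ring
  -- the limit of the lower sequence
  have hreal : Tendsto (fun t : ℕ => σ^2 * t * t / Kr t) atTop (𝓝 (σ^2)) := by
    have h1 : Tendsto (fun t : ℕ => (t:ℝ)/((t:ℝ)+1)) atTop (𝓝 1) :=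
      tendsto_natCast_div_add_atTop (1:ℝ)
    have h2 : Tendsto (fun t : ℕ => (t:ℝ)/((t:ℝ)+(c2+1))) atTop (𝓝 1) :=
      tendsto_natCast_div_add_atTop (c2+1)
    have h3 : Tendsto (fun t : ℕ => σ^2 * ((t:ℝ)/((t:ℝ)+1) * ((t:ℝ)/((t:ℝ)+(c2+1)))))
        atTop (𝓝 (σ^2 * (1 * 1))) := (h1.mul h2).const_mul (σ^2)
    rw [mul_one, mul_one] at h3
    refine h3.congr fun t => ?_
    have hne1 : ((t:ℝ)+1) ≠ 0 := by positivity
    have hne2 : ((t:ℝ)+(c2+1)) ≠ 0 :=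
      (add_pos_of_nonneg_of_pos (Nat.cast_nonneg t) hc2pos).ne'
    rw [hKr_def]
    field_simp
  have hlim : Tendsto vseq atTop (𝓝 (ENNReal.ofReal (σ^2))) :=
    ENNReal.tendsto_ofReal hreal
  calc ENNReal.ofReal (σ ^ 2) = liminf vseq atTop := (hlim.liminf_eq).symm
    _ ≤ atTop.liminf (fun t : ℕ => (t : ENNReal)
          * ∫⁻ ω, ENNReal.ofReal ((θhat t ω - θstar) ⬝ᵥ (θhat t ω - θstar)) ∂P) :=
      liminf_le_liminf (Eventually.of_forall hvle)
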